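/- Let εK, εN ≥ 0 with εK + εN < 1. Consider minimizing KL(μK ‖ μN) over pairs (μK, μN) of Borel probability measures on [0,1] subject to E_{X∼μK}[1 − X] ≤ εK and E_{X∼μN}[X] ≤ εN. Then the minimum is attained at μK* = Bern(1 − εK) (the measure placing mass 1−εK at 1 and εK at 0) and μN* = Bern(εN) (mass εN at 1 and 1−εN at 0), so the minimum value equals KL(Bern(1−εK) ‖ Bern(εN)). -/

import Mathlib

/- STATEMENT 13: Under FNR/FPR constraints E_{μK}[1−X] ≤ εK and E_{μN}[X] ≤ εN with
   εK + εN < 1, the minimum of KL(μK ‖ μN) over pairs of Borel probability measures on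
   [0,1] is attained at μK* = Bern(1−εK), μN* = Bern(εN), so the minimum value equals
   KL(Bern(1−εK) ‖ Bern(εN)). -/

open MeasureTheory
open scoped ENNReal NNReal

abbrev I01 : Set ℝ := Set.Icc 0 1

open Classical in
/-- Kullback–Leibler divergence with logarithm base 2, valued in `EReal`. -/
noncomputable def klDiv2 {α : Type*} [MeasurableSpace α] (μ ν : Measure α) : EReal :=
  if μ ≪ ν ∧ Integrable (fun x => Real.logb 2 ((μ.rnDeriv ν x).toReal)) μ
  then ((∫ x, Real.logb 2 ((μ.rnDeriv ν x).toReal) ∂μ : ℝ) : EReal)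
  else ⊤

/-- The Bernoulli measure on `[0,1]`: mass `a` at `1` and mass `1−a` at `0`. -/
noncomputable def bern01 (a : ℝ) : Measure I01 :=
  (ENNReal.ofReal a) • Measure.dirac ⟨1, Set.right_mem_Icc.mpr zero_le_one⟩
    + (ENNReal.ofReal (1 - a)) • Measure.dirac ⟨0, Set.left_mem_Icc.mpr zero_le_one⟩

/-- Feasibility for the FNR/FPR constraints. -/
def FeasBin (εK εN : ℝ) (μK μN : Measure I01) : Prop :=
  IsProbabilityMeasure μK ∧ IsProbabilityMeasure μN ∧
    (∫⁻ x, ENNReal.ofReal (1 - (x : ℝ)) ∂μK) ≤ ENNReal.ofReal εK ∧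
    (∫⁻ x, ENNReal.ofReal (x : ℝ) ∂μN) ≤ ENNReal.ofReal εN

noncomputable def Gfun (a b : ℝ) : ℝ :=
  a * Real.log a - a * Real.log b + (1 - a) * Real.log (1 - a) - (1 - a) * Real.log (1 - b)

lemma Gfun_eq {a b : ℝ} (ha0 : 0 < a) (ha1 : a ≤ 1) (hb0 : 0 < b) (hb1 : b < 1) :
    a * Real.log (a / b) + (1 - a) * Real.log ((1 - a) / (1 - b)) = Gfun a b := by
  rcases eq_or_lt_of_le ha1 with rfl | h
  · simp [Gfun, Real.log_div one_ne_zero hb0.ne']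
  · have h1a : (0:ℝ) < 1 - a := by linarith
    rw [Gfun, Real.log_div ha0.ne' hb0.ne',
      Real.log_div h1a.ne' (by linarith : (1:ℝ) - b ≠ 0)]
    ring

lemma Gfun_mono (b : ℝ) (hb0 : 0 < b) (hb1 : b < 1) :
    MonotoneOn (fun a => Gfun a b) (Set.Icc b 1) := by
  have hC : ContinuousOn (fun a => Gfun a b) (Set.Icc b 1) := by
    apply Continuous.continuousOn
    have c1 : Continuous fun a : ℝ => a * Real.log a := Real.continuous_mul_log
    have c2 : Continuous fun a : ℝ => (1 - a) * Real.log (1 - a) :=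
      Real.continuous_mul_log.comp (continuous_const.sub continuous_id)
    exact ((c1.sub (continuous_id.mul continuous_const)).add c2).sub
      ((continuous_const.sub continuous_id).mul continuous_const)
  have hd : ∀ x ∈ interior (Set.Icc b 1), HasDerivAt (fun a => Gfun a b)
      (Real.log x - Real.log b - Real.log (1 - x) + Real.log (1 - b)) x := by
    rw [interior_Icc]
    rintro x ⟨hxb, hx1⟩
    have hx0 : x ≠ 0 := (lt_trans hb0 hxb).ne'
    have h1x : (1:ℝ) - x ≠ 0 := (by linarith : (0:ℝ) < 1 - x).ne'
    have d1 := Real.hasDerivAt_mul_log hx0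
    have d2 : HasDerivAt (fun a : ℝ => (1 - a) * Real.log (1 - a))
        ((Real.log (1 - x) + 1) * (-1)) x := by
      have := (Real.hasDerivAt_mul_log h1x).comp x ((hasDerivAt_id x).const_sub 1)
      simpa [Function.comp_def] using this
    have d3 : HasDerivAt (fun a : ℝ => a * Real.log b) (1 * Real.log b) x :=
      (hasDerivAt_id x).mul_const _
    have d4 : HasDerivAt (fun a : ℝ => (1 - a) * Real.log (1 - b)) ((-1) * Real.log (1 - b)) x :=
      ((hasDerivAt_id x).const_sub 1).mul_const _
    have := ((d1.sub d3).add d2).sub d4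
    refine this.congr_deriv ?_
    ring
  refine monotoneOn_of_deriv_nonneg (convex_Icc b 1) hC
    (fun x hx => (hd x hx).differentiableAt.differentiableWithinAt) (fun x hx => ?_)
  rw [(hd x hx).deriv]
  rw [interior_Icc] at hx
  have l1 : Real.log b ≤ Real.log x := Real.log_le_log hb0 hx.1.le
  have l2 : Real.log (1 - x) ≤ Real.log (1 - b) := Real.log_le_log (by linarith [hx.2]) (by linarith [hx.1])
  linarith

lemma Gfun_anti (a : ℝ) (ha0 : 0 < a) (ha1 : a ≤ 1) :
    AntitoneOn (fun b => Gfun a b) (Set.Ioo 0 a) := by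
  have hsub : Set.Ioo (0:ℝ) a ⊆ {x : ℝ | x ≠ 0} := fun x hx => hx.1.ne'
  have hC : ContinuousOn (fun b => Gfun a b) (Set.Ioo 0 a) := by
    unfold Gfun
    have clog : ContinuousOn Real.log {x : ℝ | x ≠ 0} := Real.continuousOn_log
    have c1 : ContinuousOn (fun b : ℝ => Real.log b) (Set.Ioo 0 a) := clog.mono hsub
    have c2 : ContinuousOn (fun b : ℝ => Real.log (1 - b)) (Set.Ioo 0 a) := by
      refine clog.comp (continuous_const.sub continuous_id).continuousOn ?_
      intro x hx
      exact (by simp; nlinarith [hx.1, hx.2, ha1] : (1:ℝ) - x ≠ 0)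
    exact ((continuousOn_const.sub (continuousOn_const.mul c1)).add continuousOn_const).sub
      (continuousOn_const.mul c2)
  have hd : ∀ x ∈ interior (Set.Ioo 0 a), HasDerivAt (fun b => Gfun a b)
      ((1 - a) / (1 - x) - a / x) x := by
    rw [isOpen_Ioo.interior_eq]
    rintro x ⟨hx0, hxa⟩
    have hxa1 : x < 1 := lt_of_lt_of_le hxa ha1
    have h1x : (0:ℝ) < 1 - x := by linarith
    have d5 : HasDerivAt (fun b : ℝ => a * Real.log b) (a * x⁻¹) x :=
      (Real.hasDerivAt_log hx0.ne').const_mul a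
    have d6 : HasDerivAt (fun b : ℝ => (1 - a) * Real.log (1 - b))
        ((1 - a) * ((1 - x)⁻¹ * (-1))) x := by
      have := ((Real.hasDerivAt_log h1x.ne').comp x ((hasDerivAt_id x).const_sub 1)).const_mul (1 - a)
      simpa [Function.comp] using this
    have := (((hasDerivAt_const x (a * Real.log a)).sub d5).add
      (hasDerivAt_const x ((1 - a) * Real.log (1 - a)))).sub d6
    refine this.congr_deriv ?_
    field_simp
    ring
  refine antitoneOn_of_deriv_nonpos (convex_Ioo 0 a) hC
    (fun x hx => (hd x hx).differentiableAt.differentiableWithinAt) (fun x hx => ?_)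
  rw [(hd x hx).deriv]
  rw [isOpen_Ioo.interior_eq] at hx
  obtain ⟨hx0, hxa⟩ := hx
  have h1x : (0:ℝ) < 1 - x := by nlinarith
  have : (1 - a) / (1 - x) ≤ a / x := by
    rw [div_le_div_iff₀ h1x hx0]
    nlinarith
  linarith


lemma logsum_piece {α : Type*} [MeasurableSpace α] (ν : Measure α) [IsFiniteMeasure ν]
    {f w : α → ℝ} (hf : Measurable f) (hf0 : ∀ x, 0 ≤ f x) (hw : Measurable w)
    (hw0 : ∀ x, 0 ≤ w x) (hw1 : ∀ x, w x ≤ 1)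
    (hfi : Integrable f ν) (hfli : Integrable (fun x => f x * Real.log (f x)) ν)
    (hB : 0 < ∫ x, w x ∂ν) :
    (∫ x, w x * f x ∂ν) * Real.log ((∫ x, w x * f x ∂ν) / (∫ x, w x ∂ν))
      ≤ ∫ x, w x * (f x * Real.log (f x)) ∂ν := by
  set A := ∫ x, w x * f x ∂ν with hA
  set B := ∫ x, w x ∂ν with hBdef
  set w' : α → ℝ≥0 := fun x => (w x).toNNReal with hw'def
  have hw' : Measurable w' := hw.real_toNNReal
  have hcoe : ∀ x, (w' x : ℝ) = w x := fun x => Real.coe_toNNReal _ (hw0 x)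
  set ρ : Measure α := ν.withDensity (fun x => (w' x : ℝ≥0∞)) with hρdef
  have hwint : Integrable w ν := by
    refine Integrable.mono' (integrable_const 1) hw.aestronglyMeasurable ?_
    exact Filter.Eventually.of_forall fun x => by
      rw [Real.norm_eq_abs, abs_of_nonneg (hw0 x)]; exact hw1 x
  have hρuniv : ρ Set.univ = ENNReal.ofReal B := by
    rw [hρdef, withDensity_apply _ MeasurableSet.univ, Measure.restrict_univ]
    have hco : ∀ x, ((w' x : ℝ≥0∞)) = ENNReal.ofReal (w x) := fun x => rfl
    simp_rw [hco]
    rw [← ofReal_integral_eq_lintegral_ofReal hwint (Filter.Eventually.of_forall hw0)]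
  haveI hρfin : IsFiniteMeasure ρ := ⟨by rw [hρuniv]; exact ENNReal.ofReal_lt_top⟩
  haveI hρne : NeZero ρ := by
    constructor
    intro h
    have h2 : ρ Set.univ = 0 := by rw [h]; rfl
    rw [hρuniv] at h2
    exact absurd h2 (ENNReal.ofReal_pos.mpr hB).ne'
  have hsmul : (fun x => w' x • f x) = fun x => w x * f x := funext fun x => by
    simp [NNReal.smul_def, hcoe]
  have hsmul2 : (fun x => w' x • (f x * Real.log (f x)))
      = fun x => w x * (f x * Real.log (f x)) := funext fun x => by
    simp [NNReal.smul_def, hcoe]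
  have habs : ∀ (g : α → ℝ), Measurable g → Integrable g ν →
      Integrable (fun x => w x * g x) ν := by
    intro g hgm hg
    refine hg.mono (hw.mul hgm).aestronglyMeasurable (Filter.Eventually.of_forall fun x => ?_)
    rw [Real.norm_eq_abs, Real.norm_eq_abs, abs_mul]
    calc |w x| * |g x| ≤ 1 * |g x| := by
          apply mul_le_mul_of_nonneg_right _ (abs_nonneg _)
          rw [abs_of_nonneg (hw0 x)]; exact hw1 x
      _ = |g x| := one_mul _
  have hflm : Measurable fun x => f x * Real.log (f x) := hf.mul (Real.measurable_log.comp hf)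
  have h1 : Integrable f ρ := by
    rw [hρdef, integrable_withDensity_iff_integrable_smul hw', hsmul]
    exact habs f hf hfi
  have h2 : Integrable (fun x => f x * Real.log (f x)) ρ := by
    rw [hρdef, integrable_withDensity_iff_integrable_smul hw', hsmul2]
    exact habs _ hflm hfli
  have hint1 : ∫ x, f x ∂ρ = A := by
    rw [hρdef, integral_withDensity_eq_integral_smul hw', hsmul]
  have hint2 : ∫ x, f x * Real.log (f x) ∂ρ = ∫ x, w x * (f x * Real.log (f x)) ∂ν := by
    rw [hρdef, integral_withDensity_eq_integral_smul hw', hsmul2]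
  have jensen := Real.convexOn_mul_log.map_average_le Real.continuous_mul_log.continuousOn
    isClosed_Ici (Filter.Eventually.of_forall fun x => hf0 x) h1 h2
  have havg : ∀ (g : α → ℝ), ⨍ x, g x ∂ρ = B⁻¹ * ∫ x, g x ∂ρ := by
    intro g
    rw [average_eq, measureReal_def, hρuniv, ENNReal.toReal_ofReal hB.le, smul_eq_mul]
  have jensen' : (B⁻¹ * A) * Real.log (B⁻¹ * A)
      ≤ B⁻¹ * ∫ x, w x * (f x * Real.log (f x)) ∂ν := by
    have := jensen
    rw [havg, havg, hint1, hint2] at this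
    simpa using this
  have hBne : B ≠ 0 := hB.ne'
  have key : A * Real.log (A / B) ≤ B * (B⁻¹ * ∫ x, w x * (f x * Real.log (f x)) ∂ν) := by
    calc A * Real.log (A / B) = B * ((B⁻¹ * A) * Real.log (B⁻¹ * A)) := by
          rw [div_eq_inv_mul]; field_simp
      _ ≤ B * (B⁻¹ * ∫ x, w x * (f x * Real.log (f x)) ∂ν) :=
          mul_le_mul_of_nonneg_left jensen' hB.le
  calc A * Real.log (A / B) ≤ B * (B⁻¹ * ∫ x, w x * (f x * Real.log (f x)) ∂ν) := key
    _ = ∫ x, w x * (f x * Real.log (f x)) ∂ν := by field_simp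


noncomputable abbrev pt1 : I01 := ⟨1, Set.right_mem_Icc.mpr zero_le_one⟩
noncomputable abbrev pt0 : I01 := ⟨0, Set.left_mem_Icc.mpr zero_le_one⟩

lemma pt1_ne_pt0 : pt1 ≠ pt0 := by
  intro h
  have : (1:ℝ) = 0 := congrArg Subtype.val h
  norm_num at this

open Classical in
lemma bern01_apply (a : ℝ) {s : Set I01} (hs : MeasurableSet s) :
    bern01 a s = (if pt1 ∈ s then ENNReal.ofReal a else 0)
      + (if pt0 ∈ s then ENNReal.ofReal (1 - a) else 0) := by
  rw [bern01, Measure.add_apply, Measure.smul_apply, Measure.smul_apply,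
    Measure.dirac_apply' _ hs, Measure.dirac_apply' _ hs]
  simp only [Set.indicator_apply, Pi.one_apply, smul_eq_mul, mul_ite, mul_one, mul_zero]

lemma lintegral_bern01 (a : ℝ) (g : I01 → ℝ≥0∞) (hg : Measurable g) :
    ∫⁻ x, g x ∂bern01 a = ENNReal.ofReal a * g pt1 + ENNReal.ofReal (1 - a) * g pt0 := by
  rw [bern01, lintegral_add_measure, lintegral_smul_measure, lintegral_smul_measure,
    lintegral_dirac' _ hg, lintegral_dirac' _ hg, smul_eq_mul, smul_eq_mul]

lemma bern01_isProb {a : ℝ} (h0 : 0 ≤ a) (h1 : a ≤ 1) :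
    IsProbabilityMeasure (bern01 a) := by
  constructor
  rw [bern01_apply a MeasurableSet.univ]
  simp only [Set.mem_univ, if_true]
  rw [← ENNReal.ofReal_add h0 (by linarith)]
  norm_num

lemma integrable_dirac01 (h : I01 → ℝ) (p : I01) : Integrable h (Measure.dirac p) :=
  (integrable_const (h p)).congr (MeasureTheory.ae_eq_dirac h).symm

lemma integral_bern01 {a : ℝ} (h0 : 0 ≤ a) (h1 : a ≤ 1) (h : I01 → ℝ) :
    ∫ y, h y ∂bern01 a = a * h pt1 + (1 - a) * h pt0 := by
  have i1 : Integrable h ((ENNReal.ofReal a) • Measure.dirac pt1) :=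
    (integrable_dirac01 h pt1).smul_measure ENNReal.ofReal_ne_top
  have i2 : Integrable h ((ENNReal.ofReal (1 - a)) • Measure.dirac pt0) :=
    (integrable_dirac01 h pt0).smul_measure ENNReal.ofReal_ne_top
  rw [bern01, integral_add_measure i1 i2, integral_smul_measure, integral_smul_measure,
    integral_dirac, integral_dirac, ENNReal.toReal_ofReal h0,
    ENNReal.toReal_ofReal (by linarith : (0:ℝ) ≤ 1 - a), smul_eq_mul, smul_eq_mul]


theorem stmt_13 (εK εN : ℝ) (hεK : 0 ≤ εK) (hεN : 0 ≤ εN) (hsum : εK + εN < 1) :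
    FeasBin εK εN (bern01 (1 - εK)) (bern01 εN) ∧
    (∀ μK μN : Measure I01, FeasBin εK εN μK μN →
      klDiv2 (bern01 (1 - εK)) (bern01 εN) ≤ klDiv2 μK μN) := by
  have hεK1 : εK < 1 := by linarith
  have hεN1 : εN < 1 := by linarith
  have hKN : εN < 1 - εK := by linarith
  -- measurable coordinate functions
  have hco : Measurable fun y : I01 => (y : ℝ) := measurable_subtype_coe
  have hw2m : Measurable fun y : I01 => 1 - (y : ℝ) := measurable_const.sub hco
  -- Feasibility
  have feas : FeasBin εK εN (bern01 (1 - εK)) (bern01 εN) := by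
    refine ⟨bern01_isProb (by linarith) (by linarith), bern01_isProb hεN hεN1.le, ?_, ?_⟩
    · rw [lintegral_bern01 _ _ hw2m.ennreal_ofReal]
      norm_num
    · rw [lintegral_bern01 _ _ hco.ennreal_ofReal]
      norm_num
  refine ⟨feas, ?_⟩
  intro μK μN hfeas
  obtain ⟨hPK, hPN, hcK, hcN⟩ := hfeas
  haveI := hPK; haveI := hPN
  by_cases hεN0 : εN = 0
  · -- degenerate case: both sides ⊤
    subst hεN0
    have hRHS : ¬ (μK ≪ μN) := by
      intro hac
      have hzero : (∫⁻ x, ENNReal.ofReal (x : ℝ) ∂μN) = 0 :=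
        le_antisymm (by simpa using hcN) bot_le
      have hae := (lintegral_eq_zero_iff hco.ennreal_ofReal).mp hzero
      have haeN : (fun y : I01 => (y : ℝ)) =ᵐ[μN] (fun _ => (0:ℝ)) := by
        filter_upwards [hae] with y hy
        simp only [Pi.zero_apply] at hy ⊢
        exact le_antisymm (ENNReal.ofReal_eq_zero.mp hy) y.2.1
      have haeK : (fun y : I01 => (y : ℝ)) =ᵐ[μK] (fun _ => (0:ℝ)) := hac.ae_eq haeN
      have h1 : (∫⁻ x, ENNReal.ofReal (1 - (x : ℝ)) ∂μK) = 1 := by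
        have hcongr : (fun y : I01 => ENNReal.ofReal (1 - (y:ℝ)))
            =ᵐ[μK] (fun _ => (1:ℝ≥0∞)) := by
          filter_upwards [haeK] with y hy
          have hy' : (y : ℝ) = 0 := hy
          rw [hy']; norm_num
        rw [lintegral_congr_ae hcongr, lintegral_const, measure_univ, mul_one]
      rw [h1] at hcK
      exact absurd (lt_of_le_of_lt hcK (ENNReal.ofReal_lt_one.mpr hεK1)) (lt_irrefl _)
    have hLHS : ¬ (bern01 (1 - εK) ≪ bern01 0) := by
      intro hac
      have hnull : bern01 0 {pt1} = 0 := by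
        rw [bern01_apply _ (measurableSet_singleton pt1),
          if_pos (Set.mem_singleton pt1),
          if_neg (fun h => pt1_ne_pt0 (Set.mem_singleton_iff.mp h).symm)]
        simp
      have hz := hac hnull
      rw [bern01_apply _ (measurableSet_singleton pt1)] at hz
      simp [pt1_ne_pt0] at hz
      linarith
    simp only [klDiv2]
    rw [if_neg (fun h => hLHS h.1), if_neg (fun h => hRHS h.1)]
  · have hεN0' : 0 < εN := lt_of_le_of_ne hεN (Ne.symm hεN0)
    -- ============ compute LHS ============
    set c1 : ℝ := (1 - εK) / εN with hc1
    set c2 : ℝ := εK / (1 - εN) with hc2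
    have hc1nn : 0 ≤ c1 := div_nonneg (by linarith) hεN0'.le
    have hc2nn : 0 ≤ c2 := div_nonneg hεK (by linarith)
    have hmeas1 : MeasurableSet {y : I01 | (y : ℝ) = 1} :=
      hco (measurableSet_singleton 1)
    classical
    set g' : I01 → ℝ≥0∞ := fun y =>
      if (y : ℝ) = 1 then ENNReal.ofReal c1 else ENNReal.ofReal c2 with hg'def
    have hg' : Measurable g' := Measurable.ite hmeas1 measurable_const measurable_const
    have hg'1 : g' pt1 = ENNReal.ofReal c1 := if_pos rfl
    have hg'0 : g' pt0 = ENNReal.ofReal c2 := if_neg (by norm_num)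
    haveI : IsProbabilityMeasure (bern01 εN) := bern01_isProb hεN hεN1.le
    haveI : IsProbabilityMeasure (bern01 (1 - εK)) := bern01_isProb (by linarith) (by linarith)
    have bern01_eq : ∀ a : ℝ, bern01 a
        = (ENNReal.ofReal a) • Measure.dirac pt1 + (ENNReal.ofReal (1 - a)) • Measure.dirac pt0 :=
      fun a => rfl
    have hwd : (bern01 εN).withDensity g' = bern01 (1 - εK) := by
      ext s hs
      rw [withDensity_apply _ hs, bern01_apply _ hs, bern01_eq εN, Measure.restrict_add,
        lintegral_add_measure, Measure.restrict_smul, Measure.restrict_smul,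
        lintegral_smul_measure, lintegral_smul_measure,
        setLIntegral_dirac' hg' hs, setLIntegral_dirac' hg' hs]
      have e1 : ENNReal.ofReal εN * ENNReal.ofReal c1 = ENNReal.ofReal (1 - εK) := by
        rw [← ENNReal.ofReal_mul hεN]
        congr 1
        rw [hc1, mul_comm, div_mul_cancel₀ _ (by linarith : εN ≠ 0)]
      have e2 : ENNReal.ofReal (1 - εN) * ENNReal.ofReal c2 = ENNReal.ofReal εK := by
        rw [← ENNReal.ofReal_mul (by linarith)]
        congr 1
        rw [hc2, mul_comm, div_mul_cancel₀ _ (by linarith : (1:ℝ) - εN ≠ 0)]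
      have e3 : (1:ℝ) - (1 - εK) = εK := by ring
      rw [e3]
      by_cases h1 : pt1 ∈ s <;> by_cases h0 : pt0 ∈ s
      · rw [if_pos h1, if_pos h1, if_pos h0, if_pos h0, hg'1, hg'0, smul_eq_mul, smul_eq_mul, e1, e2]
      · rw [if_pos h1, if_pos h1, if_neg h0, if_neg h0, hg'1, smul_eq_mul, smul_eq_mul, e1, mul_zero]
      · rw [if_neg h1, if_neg h1, if_pos h0, if_pos h0, hg'0, smul_eq_mul, smul_eq_mul, e2, mul_zero]
      · rw [if_neg h1, if_neg h1, if_neg h0, if_neg h0, smul_eq_mul, smul_eq_mul, mul_zero, mul_zero]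
    have hac : bern01 (1 - εK) ≪ bern01 εN := by
      rw [← hwd]; exact withDensity_absolutelyContinuous _ _
    have hrn : (bern01 (1 - εK)).rnDeriv (bern01 εN) =ᵐ[bern01 εN] g' := by
      rw [← hwd]
      exact Measure.rnDeriv_withDensity _ hg'
    have hrnK : (bern01 (1 - εK)).rnDeriv (bern01 εN) =ᵐ[bern01 (1 - εK)] g' := hac.ae_eq hrn
    set h : I01 → ℝ := fun y => if (y : ℝ) = 1 then Real.logb 2 c1 else Real.logb 2 c2 with hhdef
    have hcong : (fun y => Real.logb 2 (((bern01 (1 - εK)).rnDeriv (bern01 εN) y).toReal))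
        =ᵐ[bern01 (1 - εK)] h := by
      filter_upwards [hrnK] with y hy
      rw [hy]
      simp only [hg'def, hhdef]
      by_cases hy1 : (y : ℝ) = 1
      · rw [if_pos hy1, if_pos hy1, ENNReal.toReal_ofReal hc1nn]
      · rw [if_neg hy1, if_neg hy1, ENNReal.toReal_ofReal hc2nn]
    have hm_h : Measurable h := Measurable.ite hmeas1 measurable_const measurable_const
    have hint_h : Integrable h (bern01 (1 - εK)) := by
      refine Integrable.mono' (integrable_const (|Real.logb 2 c1| + |Real.logb 2 c2|))
        hm_h.aestronglyMeasurable (Filter.Eventually.of_forall fun y => ?_)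
      rw [Real.norm_eq_abs]
      simp only [hhdef]
      by_cases hy1 : (y : ℝ) = 1
      · rw [if_pos hy1]
        have := abs_nonneg (Real.logb 2 c2)
        linarith
      · rw [if_neg hy1]
        have := abs_nonneg (Real.logb 2 c1)
        linarith
    have hint_target : Integrable
        (fun y => Real.logb 2 (((bern01 (1 - εK)).rnDeriv (bern01 εN) y).toReal))
        (bern01 (1 - εK)) := hint_h.congr hcong.symm
    set V : ℝ := (1 - εK) * Real.logb 2 c1 + εK * Real.logb 2 c2 with hVdef
    have hkl : klDiv2 (bern01 (1 - εK)) (bern01 εN) = ((V : ℝ) : EReal) := by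
      simp only [klDiv2]
      rw [if_pos ⟨hac, hint_target⟩]
      congr 1
      rw [integral_congr_ae hcong, integral_bern01 (by linarith) (by linarith) h]
      have h1 : h pt1 = Real.logb 2 c1 := if_pos rfl
      have h0 : h pt0 = Real.logb 2 c2 := if_neg (by norm_num)
      rw [h1, h0, hVdef]
      ring
    have hlog2 : (0:ℝ) < Real.log 2 := Real.log_pos one_lt_two
    have hV : V = Gfun (1 - εK) εN / Real.log 2 := by
      have hGe := Gfun_eq (a := 1 - εK) (b := εN) (by linarith) (by linarith) hεN0' hεN1
      have e : (1:ℝ) - (1 - εK) = εK := by ring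
      rw [e] at hGe
      rw [hVdef, eq_div_iff hlog2.ne', hc1, hc2]
      rw [← hGe]
      simp only [Real.logb]
      field_simp
    -- ============ lower bound for RHS ============
    rw [hkl]
    by_cases hcond : μK ≪ μN ∧
        Integrable (fun x => Real.logb 2 ((μK.rnDeriv μN x).toReal)) μK
    swap
    · simp only [klDiv2]
      rw [if_neg hcond]
      exact le_top
    obtain ⟨hac2, hint2⟩ := hcond
    set f : I01 → ℝ := fun x => (μK.rnDeriv μN x).toReal with hfdef
    have hfm : Measurable f := (Measure.measurable_rnDeriv _ _).ennreal_toReal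
    have hf0 : ∀ x, 0 ≤ f x := fun x => ENNReal.toReal_nonneg
    have hlogeq : (fun x => Real.log (f x)) = fun x => Real.log 2 * Real.logb 2 (f x) := by
      funext x
      rw [Real.logb]
      field_simp
    have hlog_int : Integrable (fun x => Real.log (f x)) μK := by
      rw [hlogeq]; exact hint2.const_mul _
    have hflν : Integrable (fun x => f x * Real.log (f x)) μN := by
      have := (integrable_rnDeriv_smul_iff hac2).mpr hlog_int
      simpa [smul_eq_mul] using this
    have hfν : Integrable f μN := by
      have := (integrable_rnDeriv_smul_iff (f := fun _ => (1:ℝ)) hac2).mpr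
        (integrable_const 1)
      simpa [smul_eq_mul] using this
    have hxiK : Integrable (fun y : I01 => (y : ℝ)) μK :=
      Integrable.mono' (integrable_const 1) hco.aestronglyMeasurable
        (Filter.Eventually.of_forall fun y => by
          rw [Real.norm_eq_abs, abs_of_nonneg y.2.1]; exact y.2.2)
    have hxiN : Integrable (fun y : I01 => (y : ℝ)) μN :=
      Integrable.mono' (integrable_const 1) hco.aestronglyMeasurable
        (Filter.Eventually.of_forall fun y => by
          rw [Real.norm_eq_abs, abs_of_nonneg y.2.1]; exact y.2.2)
    set a : ℝ := ∫ y, (y : ℝ) ∂μK with hadef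
    set b : ℝ := ∫ y, (y : ℝ) ∂μN with hbdef
    have hble : b ≤ εN := by
      have he : b = (∫⁻ y, ENNReal.ofReal (y : ℝ) ∂μN).toReal := by
        rw [hbdef, integral_eq_lintegral_of_nonneg_ae
          (Filter.Eventually.of_forall fun y => y.2.1) hco.aestronglyMeasurable]
      rw [he]
      calc (∫⁻ y, ENNReal.ofReal (y : ℝ) ∂μN).toReal
          ≤ (ENNReal.ofReal εN).toReal := ENNReal.toReal_mono ENNReal.ofReal_ne_top hcN
        _ = εN := ENNReal.toReal_ofReal hεN
    have hsubK : ∫ y, (1 - (y : ℝ)) ∂μK = 1 - a := by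
      rw [integral_sub (integrable_const 1) hxiK, integral_const, probReal_univ]
      simp [hadef]
    have hage : 1 - εK ≤ a := by
      have hnn : ∀ y : I01, 0 ≤ 1 - (y : ℝ) := fun y => by linarith [y.2.2]
      have he : ∫ y, (1 - (y : ℝ)) ∂μK = (∫⁻ y, ENNReal.ofReal (1 - (y : ℝ)) ∂μK).toReal := by
        rw [integral_eq_lintegral_of_nonneg_ae
          (Filter.Eventually.of_forall hnn) hw2m.aestronglyMeasurable]
      have h1 : ∫ y, (1 - (y : ℝ)) ∂μK ≤ εK := by
        rw [he]
        calc (∫⁻ y, ENNReal.ofReal (1 - (y : ℝ)) ∂μK).toReal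
            ≤ (ENNReal.ofReal εK).toReal := ENNReal.toReal_mono ENNReal.ofReal_ne_top hcK
          _ = εK := ENNReal.toReal_ofReal hεK
      rw [hsubK] at h1
      linarith
    have hale1 : a ≤ 1 := by
      have := integral_mono hxiK (integrable_const 1) (fun y => y.2.2)
      simpa [hadef] using this
    have hb0 : 0 ≤ b := integral_nonneg fun y => y.2.1
    have hbpos : 0 < b := by
      rcases eq_or_lt_of_le hb0 with hb | hb
      · exfalso
        have hz := (integral_eq_zero_iff_of_nonneg (fun y => y.2.1) hxiN).mp hb.symm
        have hzK : (fun y : I01 => (y : ℝ)) =ᵐ[μK] 0 := hac2.ae_eq hz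
        have ha0 : a = 0 := by
          rw [hadef, integral_congr_ae hzK]
          simp
        linarith
      · exact hb
    have hb1 : b < 1 := lt_of_le_of_lt hble hεN1
    -- the two Jensen pieces
    have hA1 : ∫ y, (y : ℝ) * f y ∂μN = a := by
      rw [hadef]
      have h2 := integral_rnDeriv_smul (μ := μK) (ν := μN) hac2
        (f := fun y : I01 => (y : ℝ))
      rw [← h2]
      congr 1
      funext y
      simp [smul_eq_mul, hfdef, mul_comm]
    have hA2 : ∫ y, (1 - (y : ℝ)) * f y ∂μN = 1 - a := by
      rw [← hsubK]
      have h2 := integral_rnDeriv_smul (μ := μK) (ν := μN) hac2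
        (f := fun y : I01 => 1 - (y : ℝ))
      rw [← h2]
      congr 1
      funext y
      simp [smul_eq_mul, hfdef, mul_comm]
    have hB2 : ∫ y, (1 - (y : ℝ)) ∂μN = 1 - b := by
      rw [integral_sub (integrable_const 1) hxiN, integral_const, probReal_univ]
      simp [hbdef]
    have P1 := logsum_piece μN hfm hf0 hco (fun y => y.2.1) (fun y => y.2.2) hfν hflν
      (by rw [← hbdef]; exact hbpos)
    have P2 := logsum_piece μN hfm hf0 hw2m (fun y => by linarith [y.2.2])
      (fun y => by linarith [y.2.1]) hfν hflν (by rw [hB2]; linarith)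
    rw [hA1, ← hbdef] at P1
    rw [hA2, hB2] at P2
    -- integrabilities for the sum
    have hflm : Measurable fun y => f y * Real.log (f y) :=
      hfm.mul (Real.measurable_log.comp hfm)
    have i1 : Integrable (fun y : I01 => (y : ℝ) * (f y * Real.log (f y))) μN := by
      refine hflν.mono (hco.mul hflm).aestronglyMeasurable
        (Filter.Eventually.of_forall fun y => ?_)
      rw [Real.norm_eq_abs, Real.norm_eq_abs, abs_mul]
      calc |(y : ℝ)| * |f y * Real.log (f y)| ≤ 1 * |f y * Real.log (f y)| := by
            apply mul_le_mul_of_nonneg_right _ (abs_nonneg _)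
            rw [abs_of_nonneg y.2.1]; exact y.2.2
        _ = _ := one_mul _
    have i2 : Integrable (fun y : I01 => (1 - (y : ℝ)) * (f y * Real.log (f y))) μN := by
      refine hflν.mono (hw2m.mul hflm).aestronglyMeasurable
        (Filter.Eventually.of_forall fun y => ?_)
      rw [Real.norm_eq_abs, Real.norm_eq_abs, abs_mul]
      calc |1 - (y : ℝ)| * |f y * Real.log (f y)| ≤ 1 * |f y * Real.log (f y)| := by
            apply mul_le_mul_of_nonneg_right _ (abs_nonneg _)
            rw [abs_of_nonneg (by linarith [y.2.2] : (0:ℝ) ≤ 1 - (y:ℝ))]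
            linarith [y.2.1]
        _ = _ := one_mul _
    have hsum2 : ∫ y, f y * Real.log (f y) ∂μN
        = (∫ y, (y : ℝ) * (f y * Real.log (f y)) ∂μN)
          + ∫ y, (1 - (y : ℝ)) * (f y * Real.log (f y)) ∂μN := by
      rw [← integral_add i1 i2]
      congr 1
      funext y
      ring
    have hG : Gfun a b ≤ ∫ y, f y * Real.log (f y) ∂μN := by
      rw [← Gfun_eq (by linarith : 0 < a) hale1 hbpos hb1, hsum2]
      exact add_le_add P1 P2
    have hchain : Gfun (1 - εK) εN ≤ Gfun a b := by
      have s1 : Gfun (1 - εK) εN ≤ Gfun (1 - εK) b :=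
        Gfun_anti (1 - εK) (by linarith) (by linarith)
          ⟨hbpos, by linarith⟩ ⟨hεN0', hKN⟩ hble
      have s2 : Gfun (1 - εK) b ≤ Gfun a b :=
        Gfun_mono b hbpos hb1 ⟨by linarith, by linarith⟩ ⟨by linarith, hale1⟩ hage
      linarith
    have hLrw : ∫ x, Real.logb 2 ((μK.rnDeriv μN x).toReal) ∂μK
        = (∫ y, f y * Real.log (f y) ∂μN) / Real.log 2 := by
      have h1 : ∫ y, Real.log (f y) ∂μK = ∫ y, f y * Real.log (f y) ∂μN := by
        have h2 := integral_rnDeriv_smul (μ := μK) (ν := μN) hac2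
          (f := fun y => Real.log (f y))
        rw [← h2]
        simp only [smul_eq_mul]; rfl
      rw [← h1]
      simp_rw [Real.logb]
      rw [integral_div]
    simp only [klDiv2]
    rw [if_pos ⟨hac2, hint2⟩]
    apply EReal.coe_le_coe_iff.mpr
    rw [hLrw, hV]
    rw [div_le_div_iff_of_pos_right hlog2]
    linarith
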